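/- Let Z = X + iY ∈ H₂ and let M ∈ Sp₄(ℤ). Then Im M(Z) is positive definite and m₂(Im M(Z)) ≤ (4/3)·max{ m₁(Y)⁻¹, m₂(Y) }. -/

import Mathlib

open Matrix

/-- The standard symplectic matrix `Ω = [[0, I₂],[−I₂, 0]]` in 2×2 blocks. -/
noncomputable def OmegaSp : Matrix (Fin 2 ⊕ Fin 2) (Fin 2 ⊕ Fin 2) ℤ :=
  Matrix.fromBlocks 0 1 (-1) 0

/-- `M = [[A,B],[C,D]]` (in 2×2 blocks) belongs to `Sp₄(ℤ)`, i.e. `Mᵀ Ω M = Ω`. -/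
def IsSp4 (A B C D : Matrix (Fin 2) (Fin 2) ℤ) : Prop :=
  (Matrix.fromBlocks A B C D)ᵀ * OmegaSp * Matrix.fromBlocks A B C D = OmegaSp

/-- An integer 2×2 matrix viewed as a complex matrix. -/
noncomputable def cmat (A : Matrix (Fin 2) (Fin 2) ℤ) : Matrix (Fin 2) (Fin 2) ℂ :=
  A.map (Int.cast : ℤ → ℂ)

/-- The (entrywise) imaginary part of a complex 2×2 matrix. -/
noncomputable def imPart (Z : Matrix (Fin 2) (Fin 2) ℂ) : Matrix (Fin 2) (Fin 2) ℝ :=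
  Z.map Complex.im

/-- The integral quadratic form attached to a real 2×2 matrix `Y`: `p ↦ pᵀ Y p`
for integer vectors `p ∈ ℤ²`. -/
noncomputable def quadForm (Y : Matrix (Fin 2) (Fin 2) ℝ) (p : Fin 2 → ℤ) : ℝ :=
  (fun i => (p i : ℝ)) ⬝ᵥ Y.mulVec (fun i => (p i : ℝ))

/-- The first consecutive minimum `m₁(Y)`. -/
noncomputable def m1 (Y : Matrix (Fin 2) (Fin 2) ℝ) : ℝ :=
  sInf {r : ℝ | ∃ p : Fin 2 → ℤ, p ≠ 0 ∧ quadForm Y p = r}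

/-- The second consecutive minimum `m₂(Y)`: the infimum of `qᵀYq` over integer vectors `q`
linearly independent of a vector `p` attaining `m₁(Y)`. -/
noncomputable def m2 (Y : Matrix (Fin 2) (Fin 2) ℝ) : ℝ :=
  sInf {r : ℝ | ∃ p q : Fin 2 → ℤ, p ≠ 0 ∧ quadForm Y p = m1 Y ∧
    LinearIndependent ℤ ![p, q] ∧ quadForm Y q = r}

/-! ### Reduction theory for positive definite binary quadratic forms -/

lemma castvec_ne_zero {p : Fin 2 → ℤ} (hp : p ≠ 0) : (fun i => (p i : ℝ)) ≠ 0 := by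
  intro h
  apply hp
  funext i
  have := congrFun h i
  simpa using this

lemma quadForm_pos {Y : Matrix (Fin 2) (Fin 2) ℝ} (hY : Y.PosDef) {p : Fin 2 → ℤ}
    (hp : p ≠ 0) : 0 < quadForm Y p := by
  have := hY.dotProduct_mulVec_pos (castvec_ne_zero hp)
  simpa [quadForm] using this

lemma quadForm_nonneg {Y : Matrix (Fin 2) (Fin 2) ℝ} (hY : Y.PosDef) (p : Fin 2 → ℤ) :
    0 ≤ quadForm Y p := by
  have := hY.posSemidef.dotProduct_mulVec_nonneg (fun i => (p i : ℝ))
  simpa [quadForm] using this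

lemma posdef_symm_entry {Y : Matrix (Fin 2) (Fin 2) ℝ} (hY : Y.PosDef) : Y 1 0 = Y 0 1 := by
  have := congrFun (congrFun hY.1 1) 0
  simpa [Matrix.conjTranspose_apply] using this.symm

lemma posdef_trace_pos {Y : Matrix (Fin 2) (Fin 2) ℝ} (hY : Y.PosDef) : 0 < Y.trace := by
  have h0 := hY.dotProduct_mulVec_pos (x := fun i => if i = 0 then 1 else 0) (by intro h; simpa using congrFun h 0)
  have h1 := hY.dotProduct_mulVec_pos (x := fun i => if i = 1 then 1 else 0) (by intro h; simpa using congrFun h 1)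
  simp only [Matrix.mulVec, dotProduct, Fin.sum_univ_two] at h0 h1
  rw [Matrix.trace_fin_two Y]
  norm_num at h0 h1
  linarith

lemma sublevel_finite {Y : Matrix (Fin 2) (Fin 2) ℝ} (hY : Y.PosDef) (c : ℝ) :
    {p : Fin 2 → ℤ | quadForm Y p ≤ c}.Finite := by
  have hdet : 0 < Y.det := hY.det_pos
  have htr : 0 < Y.trace := posdef_trace_pos hY
  have hs : Y 1 0 = Y 0 1 := posdef_symm_entry hY
  set K : ℝ := c * Y.trace / Y.det with hK
  have key : ∀ p : Fin 2 → ℤ, quadForm Y p ≤ c → ∀ i, |p i| ≤ ⌈K⌉ := by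
    intro p hp i
    have hb : Y.det * (((p 0 : ℝ)) ^ 2 + ((p 1 : ℝ)) ^ 2) ≤ Y.trace * quadForm Y p := by
      rw [Matrix.det_fin_two Y, Matrix.trace_fin_two Y]
      simp only [quadForm, Matrix.mulVec, dotProduct, Fin.sum_univ_two]
      rw [hs]
      nlinarith [sq_nonneg (Y 0 0 * (p 0:ℝ) + Y 0 1 * (p 1:ℝ)),
        sq_nonneg (Y 0 1 * (p 0:ℝ) + Y 1 1 * (p 1:ℝ))]
    have hsum : ((p 0 : ℝ)) ^ 2 + ((p 1 : ℝ)) ^ 2 ≤ K := by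
      rw [hK, le_div_iff₀ hdet]
      nlinarith [mul_le_mul_of_nonneg_left hp htr.le]
    have hpi : ((p i : ℝ)) ^ 2 ≤ K := by
      have h0 : (0:ℝ) ≤ ((p 0:ℝ))^2 := sq_nonneg _
      have h1 : (0:ℝ) ≤ ((p 1:ℝ))^2 := sq_nonneg _
      fin_cases i
      · show ((p 0 : ℝ))^2 ≤ K
        linarith
      · show ((p 1 : ℝ))^2 ≤ K
        linarith
    have habsint : |p i| ≤ (p i)^2 := by
      rcases abs_cases (p i) with ⟨h, _⟩ | ⟨h, _⟩ <;> nlinarith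
    have : ((|p i| : ℤ) : ℝ) ≤ K := by
      calc ((|p i| : ℤ) : ℝ) ≤ (((p i)^2 : ℤ) : ℝ) := by exact_mod_cast habsint
        _ = ((p i : ℝ))^2 := by push_cast; ring
        _ ≤ K := hpi
    have := this.trans (Int.le_ceil K)
    exact_mod_cast this
  apply Set.Finite.subset (Set.finite_Icc (fun _ : Fin 2 => -⌈K⌉) (fun _ => ⌈K⌉))
  intro p hp
  rw [Set.mem_Icc]
  constructor <;> rw [Pi.le_def] <;> intro i <;>
    have h := abs_le.mp (key p hp i)
  · simpa using h.1
  · exact h.2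
/-! ### Linear independence via the cross determinant -/

lemma vec_ne_zero_iff (p : Fin 2 → ℤ) : p ≠ 0 ↔ p 0 ≠ 0 ∨ p 1 ≠ 0 := by
  constructor
  · intro hp
    by_contra h
    push_neg at h
    exact hp (by funext i; fin_cases i <;> simp [h.1, h.2])
  · rintro (h | h) hp <;> simp [hp] at h

lemma linind_iff (p q : Fin 2 → ℤ) :
    LinearIndependent ℤ ![p, q] ↔ p 0 * q 1 - p 1 * q 0 ≠ 0 := by
  constructor
  · intro h hd
    have h' := Fintype.linearIndependent_iff.mp h
    by_cases hp : p = 0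
    · have := h' ![1, 0] (by
        funext j
        simp [Fin.sum_univ_two, hp]) 0
      simp at this
    · rcases (vec_ne_zero_iff p).mp hp with hp0 | hp1
      · have := h' ![q 0, -(p 0)] (by
          simp only [Fin.sum_univ_two, Matrix.cons_val_zero, Matrix.cons_val_one,
            Matrix.head_cons]
          funext j
          simp only [Pi.add_apply, Pi.smul_apply, smul_eq_mul, Pi.zero_apply]
          fin_cases j
          · show q 0 * p 0 + -(p 0) * q 0 = 0
            ring
          · show q 0 * p 1 + -(p 0) * q 1 = 0
            linear_combination -hd) 1
        simp at this
        exact hp0 this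
      · have := h' ![q 1, -(p 1)] (by
          simp only [Fin.sum_univ_two, Matrix.cons_val_zero, Matrix.cons_val_one,
            Matrix.head_cons]
          funext j
          simp only [Pi.add_apply, Pi.smul_apply, smul_eq_mul, Pi.zero_apply]
          fin_cases j
          · show q 1 * p 0 + -(p 1) * q 0 = 0
            linear_combination hd
          · show q 1 * p 1 + -(p 1) * q 1 = 0
            ring) 1
        simp at this
        exact hp1 this
  · intro hd
    rw [Fintype.linearIndependent_iff]
    intro g hg
    simp only [Fin.sum_univ_two, Matrix.cons_val_zero, Matrix.cons_val_one,
      Matrix.head_cons] at hg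
    have h0 := congrFun hg 0
    have h1 := congrFun hg 1
    simp only [Pi.add_apply, Pi.smul_apply, smul_eq_mul, Pi.zero_apply] at h0 h1
    intro i
    fin_cases i
    · have : g 0 * (p 0 * q 1 - p 1 * q 0) = 0 := by linear_combination q 1 * h0 - q 0 * h1
      exact (mul_eq_zero.mp this).resolve_right hd
    · have : g 1 * (p 0 * q 1 - p 1 * q 0) = 0 := by linear_combination p 0 * h1 - p 1 * h0
      exact (mul_eq_zero.mp this).resolve_right hd

lemma linind_fst_ne_zero {p q : Fin 2 → ℤ} (h : LinearIndependent ℤ ![p, q]) : p ≠ 0 := by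
  have hd := (linind_iff p q).mp h
  rw [vec_ne_zero_iff]
  by_contra hc
  push_neg at hc
  rw [hc.1, hc.2] at hd
  simp at hd

lemma linind_snd_ne_zero {p q : Fin 2 → ℤ} (h : LinearIndependent ℤ ![p, q]) : q ≠ 0 := by
  have hd := (linind_iff p q).mp h
  rw [vec_ne_zero_iff]
  by_contra hc
  push_neg at hc
  rw [hc.1, hc.2] at hd
  simp at hd

/-! ### Attainment of the minima -/

lemma m1_bddBelow (Y : Matrix (Fin 2) (Fin 2) ℝ) (hY : Y.PosDef) :
    BddBelow {r : ℝ | ∃ p : Fin 2 → ℤ, p ≠ 0 ∧ quadForm Y p = r} := by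
  refine ⟨0, ?_⟩
  rintro r ⟨p, -, rfl⟩
  exact quadForm_nonneg hY p

lemma m1_attained {Y : Matrix (Fin 2) (Fin 2) ℝ} (hY : Y.PosDef) :
    ∃ p : Fin 2 → ℤ, p ≠ 0 ∧ quadForm Y p = m1 Y ∧
      ∀ q : Fin 2 → ℤ, q ≠ 0 → quadForm Y p ≤ quadForm Y q := by
  classical
  set e : Fin 2 → ℤ := ![1, 0] with he_def
  have he : e ≠ 0 := by
    intro h
    have := congrFun h 0
    simp [he_def] at this
  set S : Set (Fin 2 → ℤ) := {p | p ≠ 0 ∧ quadForm Y p ≤ quadForm Y e} with hS_def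
  have hSfin : S.Finite := (sublevel_finite hY (quadForm Y e)).subset (fun p hp => hp.2)
  have hSne : S.Nonempty := ⟨e, he, le_refl _⟩
  obtain ⟨p, hpS, hpmin⟩ := Set.exists_min_image S (quadForm Y) hSfin hSne
  have hmin : ∀ q : Fin 2 → ℤ, q ≠ 0 → quadForm Y p ≤ quadForm Y q := by
    intro q hq
    by_cases hle : quadForm Y q ≤ quadForm Y e
    · exact hpmin q ⟨hq, hle⟩
    · exact le_trans (hpmin e ⟨he, le_refl _⟩) (le_of_not_ge hle)
  refine ⟨p, hpS.1, ?_, hmin⟩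
  unfold m1
  apply le_antisymm
  · apply le_csInf
    · exact ⟨quadForm Y p, p, hpS.1, rfl⟩
    rintro r ⟨q, hq, rfl⟩
    exact hmin q hq
  · exact csInf_le (m1_bddBelow Y hY) ⟨p, hpS.1, rfl⟩

lemma m1_pos {Y : Matrix (Fin 2) (Fin 2) ℝ} (hY : Y.PosDef) : 0 < m1 Y := by
  obtain ⟨p, hp, hpm, -⟩ := m1_attained hY
  exact hpm ▸ quadForm_pos hY hp

lemma m1_le_quadForm {Y : Matrix (Fin 2) (Fin 2) ℝ} (hY : Y.PosDef) {q : Fin 2 → ℤ}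
    (hq : q ≠ 0) : m1 Y ≤ quadForm Y q := by
  obtain ⟨p, hp, hpm, hmin⟩ := m1_attained hY
  exact hpm ▸ hmin q hq

lemma m2_bddBelow (Y : Matrix (Fin 2) (Fin 2) ℝ) (hY : Y.PosDef) :
    BddBelow {r : ℝ | ∃ p q : Fin 2 → ℤ, p ≠ 0 ∧ quadForm Y p = m1 Y ∧
      LinearIndependent ℤ ![p, q] ∧ quadForm Y q = r} := by
  refine ⟨0, ?_⟩
  rintro r ⟨p, q, -, -, -, rfl⟩
  exact quadForm_nonneg hY q

lemma m2_le_quadForm {Y : Matrix (Fin 2) (Fin 2) ℝ} (hY : Y.PosDef) {p q : Fin 2 → ℤ}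
    (hp : p ≠ 0) (hpm : quadForm Y p = m1 Y) (hli : LinearIndependent ℤ ![p, q]) :
    m2 Y ≤ quadForm Y q :=
  csInf_le (m2_bddBelow Y hY) ⟨p, q, hp, hpm, hli, rfl⟩

lemma m2_attained {Y : Matrix (Fin 2) (Fin 2) ℝ} (hY : Y.PosDef) :
    ∃ p q : Fin 2 → ℤ, p ≠ 0 ∧ quadForm Y p = m1 Y ∧
      LinearIndependent ℤ ![p, q] ∧ quadForm Y q = m2 Y := by
  classical
  obtain ⟨p, hp, hpm, hmin⟩ := m1_attained hY
  set q₁ : Fin 2 → ℤ := ![-(p 1), p 0] with hq₁_def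
  have hli₁ : LinearIndependent ℤ ![p, q₁] := by
    rw [linind_iff]
    simp only [hq₁_def, Matrix.cons_val_zero, Matrix.cons_val_one, Matrix.head_cons]
    intro hc
    rcases (vec_ne_zero_iff p).mp hp with h | h
    · nlinarith [mul_self_pos.mpr h, mul_self_nonneg (p 1)]
    · nlinarith [mul_self_pos.mpr h, mul_self_nonneg (p 0)]
  set S : Set (Fin 2 → ℤ) := {q | (∃ p' : Fin 2 → ℤ, p' ≠ 0 ∧ quadForm Y p' = m1 Y ∧
      LinearIndependent ℤ ![p', q]) ∧ quadForm Y q ≤ quadForm Y q₁} with hS_def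
  have hSfin : S.Finite := (sublevel_finite hY (quadForm Y q₁)).subset (fun q hq => hq.2)
  have hSne : S.Nonempty := ⟨q₁, ⟨p, hp, hpm, hli₁⟩, le_refl _⟩
  obtain ⟨q₀, hq₀S, hq₀min⟩ := Set.exists_min_image S (quadForm Y) hSfin hSne
  obtain ⟨⟨p₀, hp₀, hp₀m, hli₀⟩, -⟩ := hq₀S
  refine ⟨p₀, q₀, hp₀, hp₀m, hli₀, ?_⟩
  have hle2 : m2 Y ≤ quadForm Y q₀ := m2_le_quadForm hY hp₀ hp₀m hli₀
  unfold m2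
  apply le_antisymm
  · apply le_csInf
    · exact ⟨quadForm Y q₀, p₀, q₀, hp₀, hp₀m, hli₀, rfl⟩
    rintro r ⟨p', q', hp', hpm', hli', rfl⟩
    by_cases hle : quadForm Y q' ≤ quadForm Y q₁
    · exact hq₀min q' ⟨⟨p', hp', hpm', hli'⟩, hle⟩
    · exact le_trans (hq₀min q₁ ⟨⟨p, hp, hpm, hli₁⟩, le_refl _⟩) (le_of_not_ge hle)
  · exact hle2

lemma m1_le_m2 {Y : Matrix (Fin 2) (Fin 2) ℝ} (hY : Y.PosDef) : m1 Y ≤ m2 Y := by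
  obtain ⟨p, q, hp, hpm, hli, hqm⟩ := m2_attained hY
  exact hqm ▸ m1_le_quadForm hY (linind_snd_ne_zero hli)

lemma m2_pos {Y : Matrix (Fin 2) (Fin 2) ℝ} (hY : Y.PosDef) : 0 < m2 Y :=
  lt_of_lt_of_le (m1_pos hY) (m1_le_m2 hY)
/-! ### The Gram determinant identity, Hermite's inequality -/

noncomputable def bilForm (Y : Matrix (Fin 2) (Fin 2) ℝ) (p q : Fin 2 → ℤ) : ℝ :=
  (fun i => (p i : ℝ)) ⬝ᵥ Y.mulVec (fun i => (q i : ℝ))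

lemma gram_identity {Y : Matrix (Fin 2) (Fin 2) ℝ} (hs : Y 1 0 = Y 0 1) (p q : Fin 2 → ℤ) :
    quadForm Y p * quadForm Y q - (bilForm Y p q) ^ 2
      = ((p 0 * q 1 - p 1 * q 0 : ℤ) : ℝ) ^ 2 * Y.det := by
  rw [Matrix.det_fin_two Y]
  simp only [quadForm, bilForm, Matrix.mulVec, dotProduct, Fin.sum_univ_two]
  rw [hs]
  push_cast
  ring

lemma hermite_ineq {Y : Matrix (Fin 2) (Fin 2) ℝ} (hY : Y.PosDef) :
    m1 Y * m2 Y ≤ 4 / 3 * Y.det := by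
  classical
  have hs : Y 1 0 = Y 0 1 := posdef_symm_entry hY
  obtain ⟨p₁, hp₁, hpm₁, hmin₁⟩ := m1_attained hY
  -- make the minimizer primitive
  set g : ℤ := (Int.gcd (p₁ 0) (p₁ 1) : ℤ) with hg_def
  have hg0 : g ≠ 0 := by
    simp only [hg_def, ne_eq, Int.natCast_eq_zero]
    intro h
    exact hp₁ (by
      funext i
      fin_cases i
      · exact (Int.gcd_eq_zero_iff.mp h).1
      · exact (Int.gcd_eq_zero_iff.mp h).2)
  have hgpos : 0 < g := by positivity
  obtain ⟨a0, ha0⟩ : g ∣ p₁ 0 := Int.gcd_dvd_left _ _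
  obtain ⟨a1, ha1⟩ : g ∣ p₁ 1 := Int.gcd_dvd_right _ _
  set p : Fin 2 → ℤ := ![a0, a1] with hp_def
  have hpval : p₁ = fun i => g * p i := by
    funext i
    fin_cases i
    · simpa [hp_def] using ha0
    · simpa [hp_def] using ha1
  have hpne : p ≠ 0 := by
    intro h
    apply hp₁
    rw [hpval, h]
    funext i
    simp
  have hquad : quadForm Y p₁ = (g : ℝ)^2 * quadForm Y p := by
    rw [hpval]
    simp only [quadForm, Matrix.mulVec, dotProduct, Fin.sum_univ_two]
    push_cast
    ring
  have hg1 : g = 1 := by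
    have h1 : quadForm Y p₁ ≤ quadForm Y p := hmin₁ p hpne
    have h2 : 0 < quadForm Y p := quadForm_pos hY hpne
    have hgr : (g:ℝ)^2 ≤ 1 := by nlinarith
    have : g^2 ≤ 1 := by exact_mod_cast (by push_cast; linarith : ((g^2 : ℤ):ℝ) ≤ (1:ℤ))
    nlinarith
  -- p is a minimizer with coprime entries
  have hqp : quadForm Y p = m1 Y := by
    rw [← hpm₁, hquad, hg1]
    norm_num
  have hmin : ∀ q : Fin 2 → ℤ, q ≠ 0 → quadForm Y p ≤ quadForm Y q := by
    intro q hq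
    rw [hqp]
    exact m1_le_quadForm hY hq
  have e0 : p₁ 0 = p 0 := by rw [hpval, hg1]; simp
  have e1 : p₁ 1 = p 1 := by rw [hpval, hg1]; simp
  have hcop : p 0 * Int.gcdA (p 0) (p 1) + p 1 * Int.gcdB (p 0) (p 1) = 1 := by
    have hb := Int.gcd_eq_gcd_ab (p 0) (p 1)
    have hgg : ((Int.gcd (p 0) (p 1) : ℤ)) = 1 := by
      rw [← e0, ← e1, ← hg_def]
      exact hg1
    rw [hgg] at hb
    linarith [hb]
  set s : ℤ := Int.gcdA (p 0) (p 1)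
  set t : ℤ := Int.gcdB (p 0) (p 1)
  set q₀ : Fin 2 → ℤ := ![-t, s] with hq₀_def
  have hd₀ : p 0 * q₀ 1 - p 1 * q₀ 0 = 1 := by
    simp only [hq₀_def, Matrix.cons_val_zero, Matrix.cons_val_one, Matrix.head_cons]
    linarith [hcop]
  set aa : ℝ := quadForm Y p with haa_def
  have hapos : 0 < aa := quadForm_pos hY hpne
  set bb : ℝ := bilForm Y p q₀ with hbb_def
  set k : ℤ := -(round (bb / aa)) with hk_def
  set q : Fin 2 → ℤ := fun i => q₀ i + k * p i with hq_def
  have hd : p 0 * q 1 - p 1 * q 0 = 1 := by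
    simp only [hq_def]
    linear_combination hd₀
  have hli : LinearIndependent ℤ ![p, q] := (linind_iff p q).mpr (by rw [hd]; norm_num)
  have hqne : q ≠ 0 := linind_snd_ne_zero hli
  set cc : ℝ := quadForm Y q with hcc_def
  have hbil : bilForm Y p q = bb + (k : ℝ) * aa := by
    simp only [hq_def, hbb_def, haa_def, bilForm, quadForm, Matrix.mulVec, dotProduct,
      Fin.sum_univ_two]
    push_cast
    ring
  have hbabs : |bb + (k:ℝ) * aa| ≤ aa / 2 := by
    have : bb + (k:ℝ) * aa = aa * (bb / aa - (round (bb / aa) : ℝ)) := by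
      have h : aa * (bb / aa) = bb := by field_simp
      rw [mul_sub, h, hk_def]
      push_cast
      ring
    rw [this, abs_mul, abs_of_pos hapos]
    have := abs_sub_round (bb / aa)
    calc aa * |bb / aa - (round (bb/aa) : ℝ)| ≤ aa * (1/2) := by
          apply mul_le_mul_of_nonneg_left this hapos.le
      _ = aa / 2 := by ring
  have hac : aa ≤ cc := hmin q hqne
  have hgram : aa * cc - (bb + (k:ℝ)*aa)^2 = Y.det := by
    have h := gram_identity hs p q
    rw [hd, hbil] at h
    simpa [haa_def, hcc_def] using h
  have hm2c : m2 Y ≤ cc := m2_le_quadForm hY hpne hqp hli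
  have hsq : (bb + (k:ℝ)*aa)^2 ≤ aa^2 / 4 := by
    have := sq_le_sq' (neg_le_of_abs_le hbabs) (le_of_abs_le hbabs)
    calc (bb + (k:ℝ)*aa)^2 ≤ (aa/2)^2 := this
      _ = aa^2/4 := by ring
  have hACbound : aa * cc ≤ 4 / 3 * Y.det := by nlinarith
  calc m1 Y * m2 Y = aa * m2 Y := by rw [hqp]
    _ ≤ aa * cc := by apply mul_le_mul_of_nonneg_left hm2c hapos.le
    _ ≤ 4 / 3 * Y.det := hACbound

lemma det_le_m1_mul_m2 {Y : Matrix (Fin 2) (Fin 2) ℝ} (hY : Y.PosDef) :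
    Y.det ≤ m1 Y * m2 Y := by
  have hs : Y 1 0 = Y 0 1 := posdef_symm_entry hY
  obtain ⟨p, q, hp, hpm, hli, hqm⟩ := m2_attained hY
  have hd : p 0 * q 1 - p 1 * q 0 ≠ 0 := (linind_iff p q).mp hli
  have hd1 : (1:ℝ) ≤ ((p 0 * q 1 - p 1 * q 0 : ℤ):ℝ)^2 := by
    have : (1:ℤ) ≤ (p 0 * q 1 - p 1 * q 0)^2 := by
      rcases hd.lt_or_gt with h | h <;> nlinarith
    exact_mod_cast this
  have hgram := gram_identity hs p q
  rw [hpm, hqm] at hgram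
  nlinarith [sq_nonneg (bilForm Y p q), hY.det_pos]

/-! ### Complex-matrix helpers -/

lemma sp4_rel {A B C D : Matrix (Fin 2) (Fin 2) ℤ} (hM : IsSp4 A B C D) :
    Aᵀ * C = Cᵀ * A ∧ Bᵀ * D = Dᵀ * B ∧ Aᵀ * D - Cᵀ * B = 1 := by
  have h := hM
  rw [IsSp4, OmegaSp, Matrix.fromBlocks_transpose, Matrix.fromBlocks_multiply,
    Matrix.fromBlocks_multiply] at h
  simp only [Matrix.mul_zero, Matrix.mul_one, Matrix.mul_neg,
    Matrix.neg_mul, Matrix.one_mul, zero_add, add_zero, mul_zero, mul_one, mul_neg, neg_mul] at h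
  have h11 := congrArg Matrix.toBlocks₁₁ h
  have h12 := congrArg Matrix.toBlocks₁₂ h
  have h22 := congrArg Matrix.toBlocks₂₂ h
  simp only [Matrix.toBlocks_fromBlocks₁₁, Matrix.toBlocks_fromBlocks₁₂,
    Matrix.toBlocks_fromBlocks₂₂] at h11 h12 h22
  refine ⟨?_, ?_, ?_⟩
  · linear_combination (norm := abel) h11
  · linear_combination (norm := abel) h22
  · linear_combination (norm := abel) h12

lemma cmat_mul (A B : Matrix (Fin 2) (Fin 2) ℤ) : cmat (A * B) = cmat A * cmat B :=
  Matrix.map_mul (f := Int.castRingHom ℂ)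

lemma cmat_transpose (A : Matrix (Fin 2) (Fin 2) ℤ) : cmat Aᵀ = (cmat A)ᵀ := rfl

lemma cmat_one : cmat 1 = 1 := by
  ext i j
  simp [cmat, Matrix.one_apply]

lemma cmat_sub (A B : Matrix (Fin 2) (Fin 2) ℤ) : cmat (A - B) = cmat A - cmat B := by
  ext i j
  simp [cmat]

lemma cmat_conj (A : Matrix (Fin 2) (Fin 2) ℤ) :
    (cmat A).map (starRingEnd ℂ) = cmat A := by
  ext i j
  simp [cmat]

-- complex relations
lemma sp4_rel_c {A B C D : Matrix (Fin 2) (Fin 2) ℤ} (hM : IsSp4 A B C D) :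
    (cmat A)ᵀ * cmat C = (cmat C)ᵀ * cmat A ∧ (cmat B)ᵀ * cmat D = (cmat D)ᵀ * cmat B ∧
      (cmat A)ᵀ * cmat D - (cmat C)ᵀ * cmat B = 1 := by
  obtain ⟨r1, r2, r3⟩ := sp4_rel hM
  refine ⟨?_, ?_, ?_⟩
  · rw [← cmat_transpose, ← cmat_mul, ← cmat_transpose, ← cmat_mul, r1]
  · rw [← cmat_transpose, ← cmat_mul, ← cmat_transpose, ← cmat_mul, r2]
  · rw [← cmat_transpose, ← cmat_mul, ← cmat_transpose, ← cmat_mul, ← cmat_sub, r3, cmat_one]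

-- the fundamental identities
lemma sympl_id1 {Ac Bc Cc Dc Z : Matrix (Fin 2) (Fin 2) ℂ}
    (r1 : Acᵀ * Cc = Ccᵀ * Ac) (r3 : Acᵀ * Dc - Ccᵀ * Bc = 1)
    (r2 : Bcᵀ * Dc = Dcᵀ * Bc) (hZ : Zᵀ = Z) :
    (Ac * Z + Bc)ᵀ * (Cc * Z + Dc) = (Cc * Z + Dc)ᵀ * (Ac * Z + Bc) := by
  have r3t : Dcᵀ * Ac - Bcᵀ * Cc = 1 := by
    have := congrArg Matrix.transpose r3
    simpa [Matrix.transpose_sub, Matrix.transpose_mul] using this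
  have e : (Ac * Z + Bc)ᵀ * (Cc * Z + Dc) - (Cc * Z + Dc)ᵀ * (Ac * Z + Bc)
      = Zᵀ * (Acᵀ * Cc - Ccᵀ * Ac) * Z + Zᵀ * (Acᵀ * Dc - Ccᵀ * Bc)
        - (Dcᵀ * Ac - Bcᵀ * Cc) * Z + (Bcᵀ * Dc - Dcᵀ * Bc) := by
    simp only [Matrix.transpose_add, Matrix.transpose_mul]
    noncomm_ring
  rw [r3, r3t, sub_eq_zero.mpr r1, sub_eq_zero.mpr r2] at e
  simp only [Matrix.mul_zero, Matrix.zero_mul, Matrix.mul_one, Matrix.one_mul, add_zero, hZ] at e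
  exact sub_eq_zero.mp (by simpa using e)

lemma sympl_id2 {Ac Bc Cc Dc Z Zb : Matrix (Fin 2) (Fin 2) ℂ}
    (r1 : Acᵀ * Cc = Ccᵀ * Ac) (r3 : Acᵀ * Dc - Ccᵀ * Bc = 1)
    (r2 : Bcᵀ * Dc = Dcᵀ * Bc) (hZb : Zbᵀ = Zb) :
    (Ac * Zb + Bc)ᵀ * (Cc * Z + Dc) - (Cc * Zb + Dc)ᵀ * (Ac * Z + Bc) = Zb - Z := by
  have r3t : Dcᵀ * Ac - Bcᵀ * Cc = 1 := by
    have := congrArg Matrix.transpose r3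
    simpa [Matrix.transpose_sub, Matrix.transpose_mul] using this
  have e : (Ac * Zb + Bc)ᵀ * (Cc * Z + Dc) - (Cc * Zb + Dc)ᵀ * (Ac * Z + Bc)
      = Zbᵀ * (Acᵀ * Cc - Ccᵀ * Ac) * Z + Zbᵀ * (Acᵀ * Dc - Ccᵀ * Bc)
        - (Dcᵀ * Ac - Bcᵀ * Cc) * Z + (Bcᵀ * Dc - Dcᵀ * Bc) := by
    simp only [Matrix.transpose_add, Matrix.transpose_mul]
    noncomm_ring
  rw [r3, r3t, sub_eq_zero.mpr r1, sub_eq_zero.mpr r2] at e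
  simpa [hZb] using e

lemma conj_sub_self (M : Matrix (Fin 2) (Fin 2) ℂ) :
    M.map (starRingEnd ℂ) - M = (-(2 * Complex.I)) • ((imPart M).map (Complex.ofReal)) := by
  ext i j
  simp [imPart, Complex.ext_iff]
  ring

lemma re_dot (R : Matrix (Fin 2) (Fin 2) ℝ) (v : Fin 2 → ℂ) :
    (star v ⬝ᵥ (R.map (Complex.ofReal)).mulVec v).re =
      (fun i => (v i).re) ⬝ᵥ R.mulVec (fun i => (v i).re)
        + (fun i => (v i).im) ⬝ᵥ R.mulVec (fun i => (v i).im) := by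
  simp only [Matrix.mulVec, dotProduct, Fin.sum_univ_two, Matrix.map_apply,
    Pi.star_apply, Complex.star_def, Complex.add_re, Complex.mul_re, Complex.add_im,
    Complex.mul_im, Complex.conj_re, Complex.conj_im, Complex.ofReal_re, Complex.ofReal_im]
  ring

lemma re_dot_realvec (R : Matrix (Fin 2) (Fin 2) ℝ) (x : Fin 2 → ℝ) :
    (star (fun i => ((x i : ℂ))) ⬝ᵥ (R.map (Complex.ofReal)).mulVec (fun i => ((x i : ℂ)))).re
      = x ⬝ᵥ R.mulVec x := by
  rw [re_dot]
  simp

lemma re_dot_pos {R : Matrix (Fin 2) (Fin 2) ℝ} (hR : R.PosDef) {v : Fin 2 → ℂ} (hv : v ≠ 0) :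
    0 < (star v ⬝ᵥ (R.map (Complex.ofReal)).mulVec v).re := by
  rw [re_dot]
  have hmem : (fun i => (v i).re) ≠ 0 ∨ (fun i => (v i).im) ≠ 0 := by
    by_contra h
    push_neg at h
    apply hv
    funext i
    have h1 := congrFun h.1 i
    have h2 := congrFun h.2 i
    simp only [Pi.zero_apply] at h1 h2 ⊢
    exact Complex.ext h1 h2
  have hre := hR.posSemidef.dotProduct_mulVec_nonneg (fun i => (v i).re)
  have him := hR.posSemidef.dotProduct_mulVec_nonneg (fun i => (v i).im)
  rcases hmem with h | h
  · have := hR.dotProduct_mulVec_pos h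
    simp only [star_trivial] at this hre him
    nlinarith [him, this]
  · have := hR.dotProduct_mulVec_pos h
    simp only [star_trivial] at this hre him
    nlinarith [hre, this]

lemma dot_shift (P W : Matrix (Fin 2) (Fin 2) ℂ) (v : Fin 2 → ℂ) :
    star (P.mulVec v) ⬝ᵥ W.mulVec (P.mulVec v)
      = star v ⬝ᵥ (((P.map (starRingEnd ℂ))ᵀ * W * P).mulVec v) := by
  simp only [Matrix.mulVec, dotProduct, Matrix.mul_apply, Fin.sum_univ_two,
    Pi.star_apply, Matrix.map_apply, Matrix.transpose_apply, Complex.star_def, map_add,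
    _root_.map_mul]
  ring

section adjhelp
variable {α : Type*} [CommRing α]

lemma adj_add (M N : Matrix (Fin 2) (Fin 2) α) :
    Matrix.adjugate (M + N) = Matrix.adjugate M + Matrix.adjugate N := by
  rw [Matrix.adjugate_fin_two, Matrix.adjugate_fin_two, Matrix.adjugate_fin_two]
  ext i j
  fin_cases i <;> fin_cases j <;> simp <;> ring

end adjhelp

lemma adj_cmat (M : Matrix (Fin 2) (Fin 2) ℤ) :
    Matrix.adjugate (cmat M) = cmat (Matrix.adjugate M) := by
  rw [Matrix.adjugate_fin_two, Matrix.adjugate_fin_two]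
  ext i j
  fin_cases i <;> fin_cases j <;> simp [cmat]

lemma cmat_mulVec (M : Matrix (Fin 2) (Fin 2) ℤ) (u : Fin 2 → ℤ) :
    (cmat M).mulVec (fun i => ((u i : ℂ))) = fun i => (((M.mulVec u) i : ℂ)) := by
  funext i
  fin_cases i <;>
    simp [cmat, Matrix.mulVec, dotProduct, Fin.sum_univ_two]

lemma adj_im (Z : Matrix (Fin 2) (Fin 2) ℂ) (i j : Fin 2) :
    ((Matrix.adjugate Z) i j).im = (Matrix.adjugate (imPart Z)) i j := by
  rw [Matrix.adjugate_fin_two, Matrix.adjugate_fin_two]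
  fin_cases i <;> fin_cases j <;> simp [imPart]

lemma adjvec_quad {Y : Matrix (Fin 2) (Fin 2) ℝ} (hs : Y 1 0 = Y 0 1) (x : Fin 2 → ℝ) :
    ((Y.adjugate.mulVec x) ⬝ᵥ Y.mulVec (Y.adjugate.mulVec x))
      = Y.det * (![x 1, -(x 0)] ⬝ᵥ Y.mulVec ![x 1, -(x 0)]) := by
  rw [Matrix.adjugate_fin_two, Matrix.det_fin_two]
  simp [Matrix.mulVec, dotProduct, Fin.sum_univ_two]
  rw [hs]
  ring

lemma det_map_conj (P : Matrix (Fin 2) (Fin 2) ℂ) :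
    (P.map (starRingEnd ℂ)).det = (starRingEnd ℂ) P.det := by
  rw [Matrix.det_fin_two, Matrix.det_fin_two]
  simp

lemma det_map_ofReal (Y : Matrix (Fin 2) (Fin 2) ℝ) :
    (Y.map (Complex.ofReal)).det = (Y.det : ℂ) := by
  rw [Matrix.det_fin_two, Matrix.det_fin_two]
  simp

lemma conj_mulVec_star (P : Matrix (Fin 2) (Fin 2) ℂ) (v : Fin 2 → ℂ) :
    (P.map (starRingEnd ℂ)).mulVec (star v) = star (P.mulVec v) := by
  funext i
  simp [Matrix.mulVec, dotProduct, Fin.sum_univ_two]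
  fin_cases i <;> simp

lemma conj_affine {Ac Bc : Matrix (Fin 2) (Fin 2) ℂ} (Z : Matrix (Fin 2) (Fin 2) ℂ)
    (hA : Ac.map (starRingEnd ℂ) = Ac) (hB : Bc.map (starRingEnd ℂ) = Bc) :
    (Ac * Z + Bc).map (starRingEnd ℂ) = Ac * Z.map (starRingEnd ℂ) + Bc := by
  have h : (starRingEnd ℂ).mapMatrix (Ac * Z + Bc)
      = (starRingEnd ℂ).mapMatrix Ac * (starRingEnd ℂ).mapMatrix Z
        + (starRingEnd ℂ).mapMatrix Bc := by
    rw [map_add, _root_.map_mul]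
  simp only [RingHom.mapMatrix_apply] at h
  rw [h, hA, hB]

lemma map_conj_transpose (M : Matrix (Fin 2) (Fin 2) ℂ) :
    (M.map (starRingEnd ℂ))ᵀ = Mᵀ.map (starRingEnd ℂ) := rfl

/-! ### Main theorem -/

/-- for `Z = X + iY ∈ H₂` and `M = [[A,B],[C,D]] ∈ Sp₄(ℤ)`, the imaginary part of
`M(Z) = (AZ+B)(CZ+D)⁻¹` is positive definite and
`m₂(Im M(Z)) ≤ (4/3)·max{m₁(Y)⁻¹, m₂(Y)}`. -/
theorem stmt_7 (Z : Matrix (Fin 2) (Fin 2) ℂ) (hsymm : Z.IsSymm) (hposdef : (imPart Z).PosDef)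
    (A B C D : Matrix (Fin 2) (Fin 2) ℤ) (hM : IsSp4 A B C D) :
    (imPart ((cmat A * Z + cmat B) * (cmat C * Z + cmat D)⁻¹)).PosDef ∧
    m2 (imPart ((cmat A * Z + cmat B) * (cmat C * Z + cmat D)⁻¹)) ≤
      4 / 3 * max (m1 (imPart Z))⁻¹ (m2 (imPart Z)) := by
  obtain ⟨r1, r2, r3⟩ := sp4_rel_c hM
  have hZs : Zᵀ = Z := hsymm
  set Q : Matrix (Fin 2) (Fin 2) ℂ := cmat A * Z + cmat B with hQdef
  set P : Matrix (Fin 2) (Fin 2) ℂ := cmat C * Z + cmat D with hPdef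
  set Zb : Matrix (Fin 2) (Fin 2) ℂ := Z.map (starRingEnd ℂ) with hZbdef
  have hZbs : Zbᵀ = Zb := by
    rw [hZbdef, map_conj_transpose, hZs]
  -- the two fundamental symplectic identities
  have hQP : Qᵀ * P = Pᵀ * Q := sympl_id1 r1 r3 r2 hZs
  have hQb : Q.map (starRingEnd ℂ) = cmat A * Zb + cmat B :=
    conj_affine Z (cmat_conj A) (cmat_conj B)
  have hPb : P.map (starRingEnd ℂ) = cmat C * Zb + cmat D :=
    conj_affine Z (cmat_conj C) (cmat_conj D)
  have hconj : (Q.map (starRingEnd ℂ))ᵀ * P - (P.map (starRingEnd ℂ))ᵀ * Q = Zb - Z := by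
    rw [hQb, hPb]
    exact sympl_id2 r1 r3 r2 hZbs
  -- P is invertible
  have hdet : P.det ≠ 0 := by
    intro h0
    obtain ⟨v, hv, hPv⟩ := (Matrix.exists_mulVec_eq_zero_iff).mpr h0
    have h1 : star v ⬝ᵥ ((Zb - Z).mulVec v) = 0 := by
      rw [← hconj, Matrix.sub_mulVec]
      have e1 : ((Q.map (starRingEnd ℂ))ᵀ * P).mulVec v = 0 := by
        rw [← Matrix.mulVec_mulVec, hPv, Matrix.mulVec_zero]
      have e2 : star v ⬝ᵥ ((P.map (starRingEnd ℂ))ᵀ * Q).mulVec v = 0 := by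
        rw [← Matrix.mulVec_mulVec, Matrix.dotProduct_mulVec, Matrix.vecMul_transpose,
          conj_mulVec_star, hPv]
        simp
      rw [dotProduct_sub, e1, e2]
      simp
    rw [conj_sub_self Z, Matrix.smul_mulVec, dotProduct_smul] at h1
    have h2I : (-(2 * Complex.I)) ≠ 0 := by
      simp [Complex.I_ne_zero]
    have h3 := (smul_eq_zero.mp h1).resolve_left h2I
    have h4 := re_dot_pos hposdef hv
    rw [h3] at h4
    simp at h4
  have hdetu : IsUnit P.det := isUnit_iff_ne_zero.2 hdet
  have hP1 : P * P⁻¹ = 1 := Matrix.mul_nonsing_inv P hdetu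
  have hP1' : P⁻¹ * P = 1 := Matrix.nonsing_inv_mul P hdetu
  set Zp : Matrix (Fin 2) (Fin 2) ℂ := Q * P⁻¹ with hZpdef
  have s1 : Zp * P = Q := by
    rw [hZpdef, Matrix.mul_assoc, hP1', Matrix.mul_one]
  -- Zp is symmetric
  have hdetT : Pᵀ.det ≠ 0 := by rwa [Matrix.det_transpose]
  have hdetTu : IsUnit Pᵀ.det := isUnit_iff_ne_zero.2 hdetT
  have cancelP : ∀ M N : Matrix (Fin 2) (Fin 2) ℂ, Pᵀ * M * P = Pᵀ * N * P → M = N := by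
    intro M N h
    have h2 := congrArg (fun X => (Pᵀ)⁻¹ * X * P⁻¹) h
    simp only [Matrix.mul_assoc] at h2
    rw [hP1, Matrix.mul_one, Matrix.mul_one] at h2
    rw [← Matrix.mul_assoc, ← Matrix.mul_assoc, Matrix.nonsing_inv_mul _ hdetTu,
      Matrix.one_mul, Matrix.one_mul] at h2
    exact h2
  have s2 : Zpᵀ = Zp := by
    apply cancelP
    have e1 : Pᵀ * Zp * P = Pᵀ * Q := by rw [Matrix.mul_assoc, s1]
    have e2 : Pᵀ * Zpᵀ * P = (Pᵀ * Zp * P)ᵀ := by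
      simp [Matrix.transpose_mul, Matrix.mul_assoc]
    rw [e2, e1, Matrix.transpose_mul, Matrix.transpose_transpose, hQP]
  set Pb : Matrix (Fin 2) (Fin 2) ℂ := P.map (starRingEnd ℂ) with hPbdef
  set Qb : Matrix (Fin 2) (Fin 2) ℂ := Q.map (starRingEnd ℂ) with hQbdef
  set Zpb : Matrix (Fin 2) (Fin 2) ℂ := Zp.map (starRingEnd ℂ) with hZpbdef
  have s3 : Zpb * Pb = Qb := by
    have h := congrArg ((starRingEnd ℂ).mapMatrix) s1
    simpa only [_root_.map_mul, RingHom.mapMatrix_apply] using h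
  have s2b : Zpbᵀ = Zpb := by
    rw [hZpbdef, map_conj_transpose, s2]
  have s4 : Pbᵀ * Zpb = Qbᵀ := by
    have h := congrArg Matrix.transpose s3
    rw [Matrix.transpose_mul, s2b] at h
    exact h
  have s6 : Pbᵀ * (Zpb - Zp) * P = Zb - Z := by
    rw [Matrix.mul_sub, Matrix.sub_mul, Matrix.mul_assoc _ Zp P, s1, s4]
    exact hconj
  -- the key transformation identity
  set Wc : Matrix (Fin 2) (Fin 2) ℂ := (imPart Zp).map (Complex.ofReal) with hWcdef
  set Yc : Matrix (Fin 2) (Fin 2) ℂ := (imPart Z).map (Complex.ofReal) with hYcdef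
  have h2I : (-(2 * Complex.I)) ≠ 0 := by simp [Complex.I_ne_zero]
  have key : Pbᵀ * Wc * P = Yc := by
    have h := s6
    rw [conj_sub_self Zp, conj_sub_self Z] at h
    rw [Matrix.mul_smul, Matrix.smul_mul] at h
    exact smul_right_injective _ h2I h
  -- positive definiteness of the imaginary part of Zp
  have hsymZp : ∀ i j, Zp j i = Zp i j := by
    intro i j
    have h := congrFun (congrFun s2 j) i
    rw [Matrix.transpose_apply] at h
    exact h.symm
  have hermY' : (imPart Zp).IsHermitian := by
    ext i j
    rw [Matrix.conjTranspose_apply]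
    simp only [star_trivial]
    show (Zp j i).im = (Zp i j).im
    rw [hsymZp]
  have hquadeq : ∀ x : Fin 2 → ℝ, x ≠ 0 →
      star x ⬝ᵥ (imPart Zp).mulVec x
        = (star (P⁻¹.mulVec (fun i => ((x i : ℂ)))) ⬝ᵥ
            Yc.mulVec (P⁻¹.mulVec (fun i => ((x i : ℂ))))).re ∧
        P⁻¹.mulVec (fun i => ((x i : ℂ))) ≠ 0 := by
    intro x hx
    set xc : Fin 2 → ℂ := fun i => ((x i : ℂ)) with hxc_def
    have hxc : xc ≠ 0 := by
      intro h
      apply hx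
      funext i
      have := congrFun h i
      simpa [hxc_def] using this
    set w : Fin 2 → ℂ := P⁻¹.mulVec xc with hw_def
    have hPw : P.mulVec w = xc := by
      rw [hw_def, Matrix.mulVec_mulVec, hP1, Matrix.one_mulVec]
    have hwne : w ≠ 0 := by
      intro h
      rw [h, Matrix.mulVec_zero] at hPw
      exact hxc hPw.symm
    constructor
    · have e1 : star x ⬝ᵥ (imPart Zp).mulVec x
          = (star xc ⬝ᵥ Wc.mulVec xc).re := by
        rw [hWcdef, re_dot_realvec]
        simp
      rw [e1, ← hPw, dot_shift, ← hPbdef, key]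
    · exact hwne
  have posY' : (imPart Zp).PosDef := by
    refine .of_dotProduct_mulVec_pos hermY' (fun x hx => ?_)
    obtain ⟨heq, hne⟩ := hquadeq x hx
    rw [heq]
    exact re_dot_pos hposdef hne
  refine ⟨posY', ?_⟩
  -- determinant relation
  set T : ℝ := Complex.normSq P.det with hT_def
  have hTpos : 0 < T := Complex.normSq_pos.mpr hdet
  have hdetrel : (imPart Zp).det * T = (imPart Z).det := by
    have h := congrArg Matrix.det key
    rw [Matrix.det_mul, Matrix.det_mul, Matrix.det_transpose, hPbdef, det_map_conj,
      hWcdef, det_map_ofReal, hYcdef, det_map_ofReal] at h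
    have hc : (((imPart Zp).det * T : ℝ) : ℂ) = (((imPart Z).det : ℝ) : ℂ) := by
      rw [Complex.ofReal_mul, hT_def, ← Complex.mul_conj]
      linear_combination h
    exact_mod_cast hc
  -- the key lower bound on values of the new quadratic form
  set Mx : ℝ := max (m1 (imPart Z))⁻¹ (m2 (imPart Z)) with hMx_def
  have hm1Y : 0 < m1 (imPart Z) := m1_pos hposdef
  have hm2Y : 0 < m2 (imPart Z) := m2_pos hposdef
  have hMx1 : (m1 (imPart Z))⁻¹ ≤ Mx := le_max_left _ _
  have hMx2 : m2 (imPart Z) ≤ Mx := le_max_right _ _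
  have hMxpos : 0 < Mx := lt_of_lt_of_le hm2Y hMx2
  have hsY : (imPart Z) 1 0 = (imPart Z) 0 1 := posdef_symm_entry hposdef
  have keyLower : ∀ u : Fin 2 → ℤ, u ≠ 0 →
      (imPart Z).det ≤ quadForm (imPart Zp) u * T * Mx := by
    intro u hu
    set v₁ : Fin 2 → ℤ := C.adjugate.mulVec u with hv₁_def
    set v₂ : Fin 2 → ℤ := D.adjugate.mulVec u with hv₂_def
    set uc : Fin 2 → ℂ := fun i => ((u i : ℂ)) with huc_def
    set svec : Fin 2 → ℂ := P.adjugate.mulVec uc with hsvec_def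
    have hadj : P.adjugate = Z.adjugate * (cmat C).adjugate + (cmat D).adjugate := by
      rw [hPdef, adj_add, Matrix.adjugate_mul_distrib]
    have hsvec : svec = Z.adjugate.mulVec (fun i => ((v₁ i : ℂ))) + (fun i => ((v₂ i : ℂ))) := by
      rw [hsvec_def, hadj, Matrix.add_mulVec, ← Matrix.mulVec_mulVec, adj_cmat, adj_cmat,
        cmat_mulVec, cmat_mulVec]
    -- the quadratic form value times T
    have hxcast : (fun i => (((u i : ℝ) : ℂ))) = uc := by
      funext i
      simp [huc_def]
    have hquadT : quadForm (imPart Zp) u * T = (star svec ⬝ᵥ Yc.mulVec svec).re := by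
      have hx : (fun i => ((u i : ℝ))) ≠ (0 : Fin 2 → ℝ) := castvec_ne_zero hu
      obtain ⟨heq, -⟩ := hquadeq (fun i => ((u i : ℝ))) hx
      have e0 : quadForm (imPart Zp) u = star (fun i => ((u i:ℝ))) ⬝ᵥ
          (imPart Zp).mulVec (fun i => ((u i:ℝ))) := by
        simp [quadForm]
      rw [e0, heq]
      have hw2 : P⁻¹.mulVec (fun i => (((u i : ℝ)) : ℂ)) = (P.det)⁻¹ • svec := by
        rw [Matrix.inv_def, Ring.inverse_eq_inv', Matrix.smul_mulVec, hsvec_def]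
        rw [hxcast]
      rw [hw2]
      rw [star_smul, Matrix.mulVec_smul, smul_dotProduct, dotProduct_smul]
      rw [smul_eq_mul, smul_eq_mul, ← mul_assoc]
      have hstar : star (P.det)⁻¹ * (P.det)⁻¹ = ((Complex.normSq (P.det)⁻¹ : ℝ) : ℂ) := by
        rw [Complex.star_def, mul_comm, Complex.mul_conj]
      rw [hstar, Complex.re_ofReal_mul]
      have hns : Complex.normSq (P.det)⁻¹ = T⁻¹ := by
        rw [map_inv₀, hT_def]
      rw [hns]
      field_simp
    -- case analysis on v₁
    by_cases hv1 : v₁ = 0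
    · -- svec is the (complex cast of the) integer vector v₂
      have hv2 : v₂ ≠ 0 := by
        intro hv2
        have hz : svec = 0 := by
          rw [hsvec, hv1, hv2]
          funext i
          simp [Matrix.mulVec, dotProduct]
          fin_cases i <;> simp
        have h5 : P.mulVec svec = 0 := by rw [hz, Matrix.mulVec_zero]
        rw [hsvec_def, Matrix.mulVec_mulVec, Matrix.mul_adjugate,
          Matrix.smul_mulVec, Matrix.one_mulVec] at h5
        have huc0 : uc = 0 := (smul_eq_zero.mp h5).resolve_left hdet
        apply hu
        funext i
        have := congrFun huc0 i
        simpa [huc_def] using this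
      have hsvec2 : svec = (fun i => ((v₂ i : ℂ))) := by
        rw [hsvec, hv1]
        funext i
        simp [Matrix.mulVec, dotProduct]
        fin_cases i <;> simp
      have hR : (star svec ⬝ᵥ Yc.mulVec svec).re = quadForm (imPart Z) v₂ := by
        have hc : (fun i => (((v₂ i : ℝ)) : ℂ)) = (fun i => ((v₂ i : ℂ))) := by
          funext i
          simp
        rw [hsvec2, ← hc, hYcdef, re_dot_realvec]
        simp [quadForm]
      have hqv : quadForm (imPart Zp) u * T = quadForm (imPart Z) v₂ := hquadT.trans hR
      rw [hqv]
      have h6 : m1 (imPart Z) ≤ quadForm (imPart Z) v₂ := m1_le_quadForm hposdef hv2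
      have h7 : (imPart Z).det ≤ m1 (imPart Z) * m2 (imPart Z) := det_le_m1_mul_m2 hposdef
      have h8 := mul_le_mul h6 hMx2 hm2Y.le (quadForm_nonneg hposdef v₂)
      linarith
    · -- the imaginary part of svec is adj(Y) v₁
      have hsim : (fun i => (svec i).im)
          = (imPart Z).adjugate.mulVec (fun i => ((v₁ i : ℝ))) := by
        funext i
        rw [hsvec]
        fin_cases i <;>
          simp [Matrix.mulVec, dotProduct, Fin.sum_univ_two, Complex.add_im,
            Complex.mul_im, adj_im]
      have hcj : (fun i => ((![v₁ 1, -(v₁ 0)] : Fin 2 → ℤ) i : ℝ))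
          = ![((v₁ 1 : ℝ)), -((v₁ 0 : ℝ))] := by
        funext i
        fin_cases i <;> simp
      have hsim_dot : (fun i => (svec i).im) ⬝ᵥ (imPart Z).mulVec (fun i => (svec i).im)
          = (imPart Z).det * quadForm (imPart Z) ![v₁ 1, -(v₁ 0)] := by
        rw [hsim, adjvec_quad hsY]
        congr 1
        rw [quadForm, hcj]
      have hjne : (![v₁ 1, -(v₁ 0)] : Fin 2 → ℤ) ≠ 0 := by
        rw [vec_ne_zero_iff]
        rcases (vec_ne_zero_iff v₁).mp hv1 with h | h
        · right
          simpa using h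
        · left
          simpa using h
      have hrepos : 0 ≤ (fun i => (svec i).re) ⬝ᵥ (imPart Z).mulVec (fun i => (svec i).re) := by
        have := hposdef.posSemidef.dotProduct_mulVec_nonneg (fun i => (svec i).re)
        simpa using this
      have h8 : m1 (imPart Z) ≤ quadForm (imPart Z) ![v₁ 1, -(v₁ 0)] :=
        m1_le_quadForm hposdef hjne
      have h9 := mul_le_mul_of_nonneg_left h8 hposdef.det_pos.le
      have hRlow : (imPart Z).det * m1 (imPart Z) ≤ (star svec ⬝ᵥ Yc.mulVec svec).re := by
        rw [hYcdef, re_dot]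
        linarith [hsim_dot, hrepos, h9]
      have hRnonneg : 0 ≤ (star svec ⬝ᵥ Yc.mulVec svec).re := by
        nlinarith [hposdef.det_pos, hm1Y, hRlow]
      have h11 : (imPart Z).det * m1 (imPart Z) * (m1 (imPart Z))⁻¹
          ≤ (star svec ⬝ᵥ Yc.mulVec svec).re * Mx :=
        mul_le_mul hRlow hMx1 (by positivity) hRnonneg
      have h10 : (imPart Z).det * m1 (imPart Z) * (m1 (imPart Z))⁻¹ = (imPart Z).det := by
        field_simp
      rw [hquadT]
      linarith
  -- final assembly
  obtain ⟨p', hp'ne, hp'm, -⟩ := m1_attained posY'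
  have hlow : (imPart Z).det ≤ m1 (imPart Zp) * T * Mx := by
    have := keyLower p' hp'ne
    rwa [hp'm] at this
  have hH := hermite_ineq posY'
  have hm1' : 0 < m1 (imPart Zp) := m1_pos posY'
  have hm2' : 0 < m2 (imPart Zp) := m2_pos posY'
  have hdY : 0 < (imPart Z).det := hposdef.det_pos
  have h1 : m1 (imPart Zp) * m2 (imPart Zp) * (T * Mx)
      ≤ 4 / 3 * (imPart Zp).det * (T * Mx) :=
    mul_le_mul_of_nonneg_right hH (by positivity)
  have h2 : 4 / 3 * (imPart Zp).det * (T * Mx) = 4 / 3 * (imPart Z).det * Mx := by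
    rw [← hdetrel]
    ring
  have h3 : m2 (imPart Zp) * (imPart Z).det ≤ m2 (imPart Zp) * (m1 (imPart Zp) * T * Mx) :=
    mul_le_mul_of_nonneg_left hlow hm2'.le
  nlinarith [h1, h2, h3, hdY, hMxpos]
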